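/- Let d ≥ 1, let ρ > 0, and let g : ℝ^d → ℝ be ρ-strongly convex. Then for every γ > 0 the Moreau envelope g^γ is ρ/(1 + γρ)-strongly convex, i.e., x ↦ g^γ(x) − (ρ/(2(1 + γρ)))‖x‖² is convex. -/

import Mathlib

open scoped RealInnerProductSpace

/-- Convexity of the squared norm, as an explicit inequality. -/
lemma sq_norm_combo_le {E : Type*} [NormedAddCommGroup E] [InnerProductSpace ℝ E]
    (u v : E) {t s : ℝ} (ht : 0 ≤ t) (hs : 0 ≤ s) (hts : t + s = 1) :
    ‖t • u + s • v‖ ^ 2 ≤ t * ‖u‖ ^ 2 + s * ‖v‖ ^ 2 := by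
  have hexp : ‖t • u + s • v‖ ^ 2
      = t ^ 2 * ‖u‖ ^ 2 + 2 * (t * s) * ⟪u, v⟫ + s ^ 2 * ‖v‖ ^ 2 := by
    rw [norm_add_sq_real, real_inner_smul_left, real_inner_smul_right,
      norm_smul, norm_smul, Real.norm_eq_abs, Real.norm_eq_abs,
      abs_of_nonneg ht, abs_of_nonneg hs]
    ring
  nlinarith [real_inner_le_norm u v, sq_nonneg (‖u‖ - ‖v‖), mul_nonneg ht hs,
    norm_nonneg u, norm_nonneg v]

set_option maxHeartbeats 1000000 in
/-- For `g` ρ-strongly convex, for every `γ > 0` the Moreau envelope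
`g^γ` is `ρ/(1 + γρ)`-strongly convex. -/
theorem moreau_envelope_strongly_convex (d : ℕ) (hd : 1 ≤ d) (ρ : ℝ) (hρ : 0 < ρ)
    (g : EuclideanSpace ℝ (Fin d) → ℝ)
    (hstrong : ConvexOn ℝ Set.univ (fun x => g x - ρ / 2 * ‖x‖ ^ 2)) :
    ∀ γ : ℝ, 0 < γ →
      ConvexOn ℝ Set.univ
        (fun x : EuclideanSpace ℝ (Fin d) =>
          (⨅ y : EuclideanSpace ℝ (Fin d), 1 / (2 * γ) * ‖x - y‖ ^ 2 + g y)
            - ρ / (2 * (1 + γ * ρ)) * ‖x‖ ^ 2) := by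
  classical
  intro γ hγ
  have hγρ : (0 : ℝ) < 1 + γ * ρ := by positivity
  set h : EuclideanSpace ℝ (Fin d) → ℝ := fun y => g y - ρ / 2 * ‖y‖ ^ 2 with hh_def
  have hconv : ConvexOn ℝ Set.univ h := hstrong
  have hcont : Continuous h := by
    rw [← continuousOn_univ]
    exact hconv.continuousOn isOpen_univ
  clear_value h
  haveI : Nontrivial (EuclideanSpace ℝ (Fin d)) := by
    refine ⟨⟨EuclideanSpace.single ⟨0, hd⟩ (1 : ℝ), 0, fun he => ?_⟩⟩
    have := congrArg (fun z : EuclideanSpace ℝ (Fin d) => z ⟨0, hd⟩) he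
    simpa using this
  obtain ⟨v₁, hv₁s, hv₁⟩ := (isCompact_sphere (0 : EuclideanSpace ℝ (Fin d)) 1).exists_isMinOn
    (NormedSpace.sphere_nonempty.mpr zero_le_one) hcont.continuousOn
  obtain ⟨v₂, hv₂s, hv₂⟩ := (isCompact_sphere (0 : EuclideanSpace ℝ (Fin d)) 1).exists_isMaxOn
    (NormedSpace.sphere_nonempty.mpr zero_le_one) hcont.continuousOn
  set C : ℝ := max (h 0 - h v₁) (max (h v₂ - h 0) 0) with hC_def
  have hC0 : 0 ≤ C := le_max_of_le_right (le_max_right _ _)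
  have hC1 : h 0 - h v₁ ≤ C := le_max_left _ _
  have hC2 : h v₂ - h 0 ≤ C := le_max_of_le_right (le_max_left _ _)
  clear_value C
  -- affine lower bound on h
  have hlower : ∀ y : EuclideanSpace ℝ (Fin d), h 0 - C - C * ‖y‖ ≤ h y := by
    intro y
    rcases eq_or_ne y 0 with rfl | hy
    · simp only [norm_zero, mul_zero]
      linarith
    · set t : ℝ := ‖y‖ with ht_def
      have htpos : 0 < t := norm_pos_iff.mpr hy
      set v : EuclideanSpace ℝ (Fin d) := t⁻¹ • y with hv_def
      have hvnorm : ‖v‖ = 1 := by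
        rw [hv_def, norm_smul, Real.norm_eq_abs, abs_of_pos (inv_pos.mpr htpos)]
        exact inv_mul_cancel₀ htpos.ne'
      have hvs : v ∈ Metric.sphere (0 : EuclideanSpace ℝ (Fin d)) 1 :=
        mem_sphere_zero_iff_norm.mpr hvnorm
      have hnvs : -v ∈ Metric.sphere (0 : EuclideanSpace ℝ (Fin d)) 1 := by
        rw [mem_sphere_zero_iff_norm, norm_neg]
        exact hvnorm
      have htv : t • v = y := by
        rw [hv_def, smul_smul, mul_inv_cancel₀ htpos.ne', one_smul]
      clear_value t v
      rcases le_or_gt 1 t with h1 | h1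
      · -- large ‖y‖ : slope inequality
        have hlampos : 0 < t⁻¹ := inv_pos.mpr htpos
        have hlam1 : t⁻¹ ≤ 1 := inv_le_one_of_one_le₀ h1
        have hcomb : h v ≤ t⁻¹ * h y + (1 - t⁻¹) * h 0 := by
          have hcv := hconv.2 (Set.mem_univ y)
            (Set.mem_univ (0 : EuclideanSpace ℝ (Fin d))) hlampos.le
            (show (0 : ℝ) ≤ 1 - t⁻¹ by linarith)
            (show t⁻¹ + (1 - t⁻¹) = 1 by ring)
          simp only [smul_zero, add_zero, smul_eq_mul] at hcv
          rwa [← hv_def] at hcv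
        have hmin : h v₁ ≤ h v := hv₁ hvs
        have htlam : t * t⁻¹ = 1 := mul_inv_cancel₀ htpos.ne'
        have hmul : t * (t⁻¹ * h y + (1 - t⁻¹) * h 0) = h y + (t - 1) * h 0 := by
          linear_combination (h y - h 0) * htlam
        have hm1 := mul_le_mul_of_nonneg_left hcomb htpos.le
        have hm2 := mul_le_mul_of_nonneg_left hmin htpos.le
        have hm3 := mul_le_mul_of_nonneg_left
          (show h 0 - C ≤ h v₁ by linarith) htpos.le
        linarith
      · -- small ‖y‖ : reflection trick
        have hmid : h 0 ≤ 1 / 2 * h y + 1 / 2 * h (-y) := by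
          have hcv := hconv.2 (Set.mem_univ y) (Set.mem_univ (-y))
            (show (0 : ℝ) ≤ 1 / 2 by norm_num) (show (0 : ℝ) ≤ 1 / 2 by norm_num)
            (show (1 / 2 : ℝ) + 1 / 2 = 1 by norm_num)
          have hz : (1 / 2 : ℝ) • y + (1 / 2 : ℝ) • (-y)
              = (0 : EuclideanSpace ℝ (Fin d)) := by module
          rw [hz] at hcv
          simpa only [smul_eq_mul] using hcv
        have hub : h (-y) ≤ t * h (-v) + (1 - t) * h 0 := by
          have hcv := hconv.2 (Set.mem_univ (-v))
            (Set.mem_univ (0 : EuclideanSpace ℝ (Fin d))) htpos.le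
            (show (0 : ℝ) ≤ 1 - t by linarith)
            (show t + (1 - t) = 1 by ring)
          simp only [smul_zero, add_zero, smul_eq_mul] at hcv
          rwa [smul_neg, htv] at hcv
        have hmax : h (-v) ≤ h v₂ := hv₂ hnvs
        have hm1 := mul_le_mul_of_nonneg_left hmax htpos.le
        have hm2 := mul_le_mul_of_nonneg_left hC2 htpos.le
        linarith
  -- lower bound on the objective, hence boundedness below
  set L : ℝ := h 0 - C - C ^ 2 / (2 * ρ) with hL_def
  clear_value L
  have hobj : ∀ x y : EuclideanSpace ℝ (Fin d),
      L ≤ 1 / (2 * γ) * ‖x - y‖ ^ 2 + g y := by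
    intro x y
    have h1 : h 0 - C - C * ‖y‖ ≤ h y := hlower y
    have h2 : (0 : ℝ) ≤ 1 / (2 * γ) * ‖x - y‖ ^ 2 := by positivity
    have h3 : g y = h y + ρ / 2 * ‖y‖ ^ 2 := by simp only [hh_def]; ring
    have h4 : C ^ 2 / (2 * ρ) * (2 * ρ) = C ^ 2 := by field_simp
    have h5 : C * ‖y‖ ≤ ρ / 2 * ‖y‖ ^ 2 + C ^ 2 / (2 * ρ) := by
      nlinarith [sq_nonneg (ρ * ‖y‖ - C), hρ, h4, mul_pos hρ hρ]
    linarith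
  have hbdd : ∀ x : EuclideanSpace ℝ (Fin d),
      BddBelow (Set.range fun y : EuclideanSpace ℝ (Fin d) =>
        1 / (2 * γ) * ‖x - y‖ ^ 2 + g y) := by
    intro x
    refine ⟨L, ?_⟩
    rintro _ ⟨y, rfl⟩
    exact hobj x y
  -- abbreviations for the completed square
  set a : ℝ := 1 / γ + ρ with ha_def
  have ha : 0 < a := by positivity
  set b : ℝ := 1 / (1 + γ * ρ) with hb_def
  set κ : ℝ := ρ / (2 * (1 + γ * ρ)) with hκ_def
  -- the completed-square identity
  have hid : ∀ x y : EuclideanSpace ℝ (Fin d),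
      1 / (2 * γ) * ‖x - y‖ ^ 2 + g y - κ * ‖x‖ ^ 2
        = a / 2 * ‖y - b • x‖ ^ 2 + h y := by
    intro x y
    have e1 : ‖x - y‖ ^ 2 = ‖x‖ ^ 2 - 2 * ⟪x, y⟫ + ‖y‖ ^ 2 := norm_sub_sq_real x y
    have e2 : ‖y - b • x‖ ^ 2 = ‖y‖ ^ 2 - 2 * (b * ⟪x, y⟫) + (|b| * ‖x‖) ^ 2 := by
      rw [norm_sub_sq_real, real_inner_smul_right, real_inner_comm y x,
        norm_smul, Real.norm_eq_abs]
    have e3 : (|b| * ‖x‖) ^ 2 = b ^ 2 * ‖x‖ ^ 2 := by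
      rw [mul_pow, sq_abs]
    simp only [hh_def]
    rw [e1, e2, e3, hκ_def, ha_def, hb_def]
    field_simp
    ring
  clear_value a b κ
  set I : EuclideanSpace ℝ (Fin d) → ℝ := fun x =>
    ⨅ y : EuclideanSpace ℝ (Fin d), 1 / (2 * γ) * ‖x - y‖ ^ 2 + g y with hI_def
  have hIle : ∀ x y' : EuclideanSpace ℝ (Fin d),
      I x ≤ 1 / (2 * γ) * ‖x - y'‖ ^ 2 + g y' := fun x y' => ciInf_le (hbdd x) y'
  have hIge : ∀ (x : EuclideanSpace ℝ (Fin d)) (c : ℝ),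
      (∀ y' : EuclideanSpace ℝ (Fin d), c ≤ 1 / (2 * γ) * ‖x - y'‖ ^ 2 + g y') →
        c ≤ I x := fun x c hc => le_ciInf hc
  refine ⟨convex_univ, ?_⟩
  intro x₁ _ x₂ _ t s ht hs hts
  show I (t • x₁ + s • x₂) - κ * ‖t • x₁ + s • x₂‖ ^ 2
      ≤ t • (I x₁ - κ * ‖x₁‖ ^ 2) + s • (I x₂ - κ * ‖x₂‖ ^ 2)
  clear_value I
  simp only [smul_eq_mul]
  rcases ht.eq_or_lt with rfl | htpos
  · obtain rfl : s = 1 := by linarith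
    simp
  rcases hs.eq_or_lt with rfl | hspos
  · obtain rfl : t = 1 := by linarith
    simp
  -- key pointwise inequality
  have key : ∀ y₁ y₂ : EuclideanSpace ℝ (Fin d),
      I (t • x₁ + s • x₂) - κ * ‖t • x₁ + s • x₂‖ ^ 2 + t * (κ * ‖x₁‖ ^ 2)
          + s * (κ * ‖x₂‖ ^ 2)
        ≤ t * (1 / (2 * γ) * ‖x₁ - y₁‖ ^ 2 + g y₁)
          + s * (1 / (2 * γ) * ‖x₂ - y₂‖ ^ 2 + g y₂) := by
    intro y₁ y₂
    have hinf := hIle (t • x₁ + s • x₂) (t • y₁ + s • y₂)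
    have e1 := hid (t • x₁ + s • x₂) (t • y₁ + s • y₂)
    have e2 := hid x₁ y₁
    have e3 := hid x₂ y₂
    have hhy : h (t • y₁ + s • y₂) ≤ t * h y₁ + s * h y₂ := by
      have := hconv.2 (Set.mem_univ y₁) (Set.mem_univ y₂) ht hs hts
      simpa only [smul_eq_mul] using this
    have hu : (t • y₁ + s • y₂) - b • (t • x₁ + s • x₂)
        = t • (y₁ - b • x₁) + s • (y₂ - b • x₂) := by
      module
    have hn : ‖(t • y₁ + s • y₂) - b • (t • x₁ + s • x₂)‖ ^ 2
        ≤ t * ‖y₁ - b • x₁‖ ^ 2 + s * ‖y₂ - b • x₂‖ ^ 2 := by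
      rw [hu]
      exact sq_norm_combo_le _ _ ht hs hts
    have hn2 : a / 2 * ‖(t • y₁ + s • y₂) - b • (t • x₁ + s • x₂)‖ ^ 2
        ≤ a / 2 * (t * ‖y₁ - b • x₁‖ ^ 2 + s * ‖y₂ - b • x₂‖ ^ 2) :=
      mul_le_mul_of_nonneg_left hn (by positivity)
    have e2' : t * (1 / (2 * γ) * ‖x₁ - y₁‖ ^ 2 + g y₁ - κ * ‖x₁‖ ^ 2)
        = t * (a / 2 * ‖y₁ - b • x₁‖ ^ 2 + h y₁) := by rw [e2]
    have e3' : s * (1 / (2 * γ) * ‖x₂ - y₂‖ ^ 2 + g y₂ - κ * ‖x₂‖ ^ 2)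
        = s * (a / 2 * ‖y₂ - b • x₂‖ ^ 2 + h y₂) := by rw [e3]
    linarith
  -- pass to the infima
  have step1 : ∀ y₁ : EuclideanSpace ℝ (Fin d),
      I (t • x₁ + s • x₂) - κ * ‖t • x₁ + s • x₂‖ ^ 2 + t * (κ * ‖x₁‖ ^ 2)
          + s * (κ * ‖x₂‖ ^ 2) - s * I x₂
        ≤ t * (1 / (2 * γ) * ‖x₁ - y₁‖ ^ 2 + g y₁) := by
    intro y₁
    have h6 : (I (t • x₁ + s • x₂) - κ * ‖t • x₁ + s • x₂‖ ^ 2 + t * (κ * ‖x₁‖ ^ 2)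
        + s * (κ * ‖x₂‖ ^ 2) - t * (1 / (2 * γ) * ‖x₁ - y₁‖ ^ 2 + g y₁)) / s
          ≤ I x₂ := by
      refine hIge _ _ fun y₂ => ?_
      rw [div_le_iff₀ hspos]
      linarith [key y₁ y₂]
    rw [div_le_iff₀ hspos] at h6
    linarith
  have step2 : (I (t • x₁ + s • x₂) - κ * ‖t • x₁ + s • x₂‖ ^ 2 + t * (κ * ‖x₁‖ ^ 2)
      + s * (κ * ‖x₂‖ ^ 2) - s * I x₂) / t ≤ I x₁ := by
    refine hIge _ _ fun y₁ => ?_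
    rw [div_le_iff₀ htpos]
    linarith [step1 y₁]
  rw [div_le_iff₀ htpos] at step2
  linarith
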